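/- Strict convexity of the chi-score change: if the fixed observed counts satisfy (o_+, o_−) ≠ (0, 0), then the function c ↦ δ_chi(c) is strictly convex on the open interval (l_s, u_s). -/

import Mathlib

/-- The chi score of a bin with observed count `o` and expected count `e`. -/
noncomputable def chiScore (o e : ℝ) : ℝ := (o - e) ^ 2 / e

/-- The change in total chi score due to a vertical split of the bin
`(ls, us] × (lt, ut]` at coordinate `c`, with fixed observed counts `op`
above and `om` below the split, and total sample size `n`. -/
noncomputable def deltaChi (ls us lt ut n op om : ℝ) (c : ℝ) : ℝ :=
  chiScore op ((us - c) * (ut - lt) / n) +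
  chiScore om ((c - ls) * (ut - lt) / n) -
  chiScore (op + om) ((us - ls) * (ut - lt) / n)

private lemma strictConvexOn_inv' : StrictConvexOn ℝ (Set.Ioi 0) (fun x : ℝ => x⁻¹) := by
  have h := strictConvexOn_zpow (m := -1) (by norm_num) (by norm_num)
  simpa [zpow_neg, zpow_one] using h

private lemma aux_upper (ls us : ℝ) : StrictConvexOn ℝ (Set.Ioo ls us)
    (fun c : ℝ => (us - c)⁻¹) := by
  refine ⟨convex_Ioo _ _, ?_⟩
  intro x hx y hy hxy a b ha hb hab
  have hx' : us - x ∈ Set.Ioi (0:ℝ) := by simp [sub_pos]; exact hx.2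
  have hy' : us - y ∈ Set.Ioi (0:ℝ) := by simp [sub_pos]; exact hy.2
  have hne : us - x ≠ us - y := fun h => hxy (by linarith)
  have key := strictConvexOn_inv'.2 hx' hy' hne ha hb hab
  have harg : a • (us - x) + b • (us - y) = us - (a • x + b • y) := by
    simp only [smul_eq_mul]; linear_combination us * hab
  rw [harg] at key
  simpa using key

private lemma aux_lower (ls us : ℝ) : StrictConvexOn ℝ (Set.Ioo ls us)
    (fun c : ℝ => (c - ls)⁻¹) := by
  refine ⟨convex_Ioo _ _, ?_⟩
  intro x hx y hy hxy a b ha hb hab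
  have hx' : x - ls ∈ Set.Ioi (0:ℝ) := by simp [sub_pos]; exact hx.1
  have hy' : y - ls ∈ Set.Ioi (0:ℝ) := by simp [sub_pos]; exact hy.1
  have hne : x - ls ≠ y - ls := fun h => hxy (by linarith)
  have key := strictConvexOn_inv'.2 hx' hy' hne ha hb hab
  have harg : a • (x - ls) + b • (y - ls) = (a • x + b • y) - ls := by
    simp only [smul_eq_mul]; linear_combination (-ls) * hab
  rw [harg] at key
  simpa using key

private lemma strictConvexOn_smul {s : Set ℝ} {f : ℝ → ℝ} {c : ℝ} (hc : 0 < c)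
    (hf : StrictConvexOn ℝ s f) : StrictConvexOn ℝ s (fun x => c * f x) := by
  refine ⟨hf.1, ?_⟩
  intro x hx y hy hxy a b ha hb hab
  have key := hf.2 hx hy hxy ha hb hab
  simp only [smul_eq_mul] at *
  nlinarith [key]

/-- If `(op, om) ≠ (0, 0)`, the chi-score change `c ↦ δ_chi(c)` is strictly
convex on the open interval `(ls, us)`. -/
theorem deltaChi_strictConvexOn (ls us lt ut n op om : ℝ)
    (hlu : ls < us) (hlt : lt < ut) (hn : 0 < n)
    (hop : 0 ≤ op) (hom : 0 ≤ om) (hne : ¬(op = 0 ∧ om = 0)) :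
    StrictConvexOn ℝ (Set.Ioo ls us) (deltaChi ls us lt ut n op om) := by
  set k : ℝ := (ut - lt) / n with hk
  have hkpos : 0 < k := div_pos (by linarith) hn
  set C : ℝ := (us - ls) * k - 2 * (op + om) -
      chiScore (op + om) ((us - ls) * (ut - lt) / n) with hC
  set g : ℝ → ℝ := fun c =>
      (op ^ 2 / k) * (us - c)⁻¹ + ((om ^ 2 / k) * (c - ls)⁻¹ + C) with hg
  -- g is strictly convex
  have hgsc : StrictConvexOn ℝ (Set.Ioo ls us) g := by
    rcases not_and_or.mp hne with h | h
    · have hoppos : 0 < op := lt_of_le_of_ne hop (Ne.symm h)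
      have h1 : StrictConvexOn ℝ (Set.Ioo ls us)
          (fun c => (op ^ 2 / k) * (us - c)⁻¹) :=
        strictConvexOn_smul (div_pos (by positivity) hkpos) (aux_upper ls us)
      have h2 : ConvexOn ℝ (Set.Ioo ls us)
          (fun c => (om ^ 2 / k) * (c - ls)⁻¹ + C) := by
        have := ((aux_lower ls us).convexOn.smul
          (c := om ^ 2 / k) (by positivity)).add_const C
        simpa [smul_eq_mul, Pi.add_def] using this
      exact h1.add_convexOn h2
    · have hompos : 0 < om := lt_of_le_of_ne hom (Ne.symm h)
      have h1 : ConvexOn ℝ (Set.Ioo ls us)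
          (fun c => (op ^ 2 / k) * (us - c)⁻¹) := by
        have := (aux_upper ls us).convexOn.smul (c := op ^ 2 / k) (by positivity)
        simpa [smul_eq_mul] using this
      have h2 : StrictConvexOn ℝ (Set.Ioo ls us)
          (fun c => (om ^ 2 / k) * (c - ls)⁻¹ + C) :=
        (strictConvexOn_smul (div_pos (by positivity) hkpos)
          (aux_lower ls us)).add_const C
      exact h1.add_strictConvexOn h2
  -- deltaChi agrees with g on Ioo ls us
  have heq : ∀ c ∈ Set.Ioo ls us, deltaChi ls us lt ut n op om c = g c := by
    intro c hc
    have h1 : (0:ℝ) < us - c := by linarith [hc.2]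
    have h2 : (0:ℝ) < c - ls := by linarith [hc.1]
    have h3 : (0:ℝ) < ut - lt := by linarith
    have hn' : n ≠ 0 := ne_of_gt hn
    simp only [deltaChi, chiScore, hg, hC, hk]
    field_simp
    ring
  refine ⟨convex_Ioo _ _, ?_⟩
  intro x hx y hy hxy a b ha hb hab
  have hmem : a • x + b • y ∈ Set.Ioo ls us :=
    hgsc.1 hx hy ha.le hb.le hab
  rw [heq _ hmem, heq _ hx, heq _ hy]
  exact hgsc.2 hx hy hxy ha hb hab
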